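/- Fix n ≥ 2 and R ≥ 13. Let y be a Perron number whose minimal polynomial over ℚ has degree n, with R/2 ≤ y ≤ R, and such that every Galois conjugate μ ≠ y of y satisfies |μ| < R/3. Then the number of such y is, for all sufficiently large R, at least c · R^{n(n+1)/2} for some constant c > 0 depending only on n. -/

import Mathlib

open Polynomial

/-- A Perron number: a real algebraic integer `λ > 1` all of whose Galois conjugates
`μ ≠ λ` satisfy `|μ| < λ`. -/
def IsPerronNumber (l : ℝ) : Prop :=
  1 < l ∧ IsIntegral ℤ l ∧
    ∀ μ ∈ (minpoly ℚ l).aroots ℂ, μ ≠ (l : ℂ) → ‖μ‖ < l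

set_option maxHeartbeats 1000000

noncomputable section
namespace PerronAux

open Finset

def aF (n : ℕ) (z : ℤ × (Fin (n - 1) → ℤ)) (i : ℕ) : ℤ :=
  if h : i < n - 1 then 4 * z.2 ⟨i, h⟩ + 2 else 2 * z.1

def pol (n : ℕ) (z : ℤ × (Fin (n - 1) → ℤ)) : ℤ[X] :=
  X ^ n - ∑ i ∈ range n, C (aF n z i) * X ^ i

variable {n : ℕ} (hn : 2 ≤ n) {z : ℤ × (Fin (n - 1) → ℤ)}

lemma degree_sum_lt :
    (∑ i ∈ range n, C (aF n z i) * X ^ i : ℤ[X]).degree < (n : ℕ) := by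
  apply lt_of_le_of_lt (degree_sum_le _ _)
  rw [Finset.sup_lt_iff (by exact_mod_cast WithBot.bot_lt_coe n)]
  intro i hi
  exact lt_of_le_of_lt (degree_C_mul_X_pow_le i _)
    (by exact_mod_cast mem_range.mp hi)

lemma pol_monic : (pol n z).Monic := monic_X_pow_sub (degree_sum_lt)

lemma pol_natDegree : (pol n z).natDegree = n := by
  have h := pol_monic (n := n) (z := z)
  unfold pol at h ⊢
  apply natDegree_eq_of_degree_eq_some
  rw [sub_eq_add_neg]
  rw [degree_add_eq_left_of_degree_lt, degree_X_pow]
  rw [degree_neg, degree_X_pow]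
  exact degree_sum_lt

lemma pol_coeff_lt {i : ℕ} (hi : i < n) : (pol n z).coeff i = -aF n z i := by
  unfold pol
  rw [coeff_sub, coeff_X_pow, if_neg (Nat.ne_of_lt hi)]
  rw [finset_sum_coeff]
  simp only [coeff_C_mul, coeff_X_pow]
  rw [Finset.sum_eq_single i]
  · simp
  · intro b _ hb; simp [Ne.symm hb]
  · intro h; exact absurd (mem_range.mpr hi) h

lemma pol_coeff_n : (pol n z).coeff n = 1 := by
  unfold pol
  rw [coeff_sub, coeff_X_pow, if_pos rfl]
  rw [finset_sum_coeff]
  simp only [coeff_C_mul, coeff_X_pow]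
  rw [Finset.sum_eq_zero]
  · ring
  · intro b hb
    rw [if_neg (Ne.symm (Nat.ne_of_lt (mem_range.mp hb))), mul_zero]

lemma pol_aeval {S : Type*} [CommRing S] [Algebra ℤ S] (x : S) :
    aeval x (pol n z) = x ^ n - ∑ i ∈ range n, (aF n z i : S) * x ^ i := by
  unfold pol
  simp [map_sub, map_sum, map_mul, map_pow]

include hn in
lemma pol_irreducible : Irreducible (pol n z) := by
  have hmon : (pol n z).Monic := pol_monic
  have hdeg : (pol n z).natDegree = n := pol_natDegree
  have h2 : Ideal.IsPrime (Ideal.span {(2 : ℤ)}) :=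
    (Ideal.span_singleton_prime (by norm_num)).mpr Int.prime_two
  have heis : (pol n z).IsEisensteinAt (Ideal.span {(2 : ℤ)}) := by
    apply hmon.isEisensteinAt_of_mem_of_notMem h2.ne_top
    · intro i hi
      rw [hdeg] at hi
      rw [pol_coeff_lt hi, Ideal.mem_span_singleton]
      unfold aF
      split
      · exact ⟨-(2 * z.2 ⟨i, by omega⟩ + 1), by ring⟩
      · exact ⟨-z.1, by ring⟩
    · have h0n : 0 < n := by omega
      have h0 : (pol n z).coeff 0 = -(4 * z.2 ⟨0, by omega⟩ + 2) := by
        rw [pol_coeff_lt h0n]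
        unfold aF
        rw [dif_pos (by omega)]
      rw [Ideal.span_singleton_pow, Ideal.mem_span_singleton, h0]
      rintro ⟨k, hk⟩
      omega
  exact heis.irreducible h2 hmon.isPrimitive (by omega)

include hn in
lemma pol_map_irreducible : Irreducible ((pol n z).map (algebraMap ℤ ℚ)) :=
  ((pol_monic (n := n) (z := z)).irreducible_iff_irreducible_map_fraction_map).mp
    (pol_irreducible hn)

include hn in
lemma minpoly_eq {y : ℝ} (hy : aeval y (pol n z) = 0) :
    minpoly ℚ y = (pol n z).map (algebraMap ℤ ℚ) := by
  refine (minpoly.eq_of_irreducible_of_monic (pol_map_irreducible hn) ?_ ?_).symm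
  · rw [aeval_map_algebraMap]; exact hy
  · exact (pol_monic).map _

def E (n : ℕ) : ℝ := (n : ℝ) ^ 2 * 10 ^ n

def Cond (n : ℕ) (R : ℝ) (z : ℤ × (Fin (n - 1) → ℤ)) : Prop :=
  7 * R / 20 ≤ (z.1 : ℝ) ∧ (z.1 : ℝ) ≤ 2 * R / 5 ∧
    ∀ i : Fin (n - 1), 1 ≤ z.2 i ∧ (4 * (z.2 i : ℝ) + 2) ≤ R ^ (n - (i : ℕ)) / E n

include hn in
lemma E_ge : 400 ≤ E n := by
  have h1 : (2:ℝ) ≤ (n:ℝ) := by exact_mod_cast hn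
  have h2 : (10:ℝ) ^ 2 ≤ 10 ^ n := pow_le_pow_right₀ (by norm_num) hn
  have : (2:ℝ)^2 * 10^2 ≤ (n:ℝ)^2 * 10^n :=
    mul_le_mul (by nlinarith) h2 (by positivity) (by positivity)
  unfold E; nlinarith

section Analytic

variable {R : ℝ} (hR : 100 * E n ≤ R) (hz : Cond n R z)

include hn hR in
lemma R_big : 40000 ≤ R := le_trans (by nlinarith [E_ge hn]) hR

include hn hR in
lemma R_pos : (0:ℝ) < R := lt_of_lt_of_le (by norm_num) (R_big hn hR)

include hn hR hz in
lemma abs_aF {i : ℕ} (hi : i < n - 1) :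
    |(aF n z i : ℝ)| ≤ R ^ (n - i) / E n := by
  obtain ⟨-, -, h3⟩ := id hz
  obtain ⟨hm1, hm2⟩ := h3 ⟨i, hi⟩
  have : aF n z i = 4 * z.2 ⟨i, hi⟩ + 2 := by unfold aF; rw [dif_pos hi]
  rw [this]
  have hpos : (0:ℝ) ≤ (4 * (z.2 ⟨i, hi⟩ : ℝ) + 2) := by
    have : (1:ℝ) ≤ (z.2 ⟨i, hi⟩ : ℝ) := by exact_mod_cast hm1
    linarith
  rw [abs_of_nonneg (by push_cast; push_cast at hpos; linarith)]
  push_cast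
  exact hm2

include hn hR hz in
lemma sum_bound {x : ℝ} (hx : |x| ≤ R) {j : ℕ} (hj : j ≤ n - 1) :
    |∑ i ∈ range j, (aF n z i : ℝ) * x ^ i| ≤ n * R ^ n / E n := by
  have hE : (0:ℝ) < E n := lt_of_lt_of_le (by norm_num) (E_ge hn)
  have hR0 : (0:ℝ) < R := R_pos hn hR
  calc |∑ i ∈ range j, (aF n z i : ℝ) * x ^ i|
      ≤ ∑ i ∈ range j, |(aF n z i : ℝ) * x ^ i| := Finset.abs_sum_le_sum_abs _ _
    _ ≤ ∑ _i ∈ range j, R ^ n / E n := by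
        apply Finset.sum_le_sum
        intro i hi
        have hi' : i < j := mem_range.mp hi
        rw [abs_mul, abs_pow]
        calc |(aF n z i : ℝ)| * |x| ^ i
            ≤ (R ^ (n - i) / E n) * R ^ i := by
              apply mul_le_mul (abs_aF hn hR hz (by omega)) (pow_le_pow_left₀ (abs_nonneg x) hx i)
                (by positivity) (by positivity)
          _ = R ^ n / E n := by
              rw [div_mul_eq_mul_div, ← pow_add]
              congr 2
              omega
    _ = j * (R ^ n / E n) := by rw [Finset.sum_const, card_range, nsmul_eq_mul]
    _ ≤ n * (R ^ n / E n) := by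
        have : (j:ℝ) ≤ n := by exact_mod_cast le_trans hj (Nat.sub_le n 1)
        apply mul_le_mul_of_nonneg_right this (by positivity)
    _ = n * R ^ n / E n := by ring

include hn hR hz in
lemma exists_root : ∃ y : ℝ, aeval y (pol n z) = 0 ∧
    2 * (z.1:ℝ) - R/10 ≤ y ∧ y ≤ 2 * (z.1:ℝ) + R/10 := by
  obtain ⟨k, rfl⟩ : ∃ k, n = k + 1 := ⟨n - 1, by omega⟩
  have hE : (0:ℝ) < E (k+1) := lt_of_lt_of_le (by norm_num) (E_ge hn)
  have hR0 : (0:ℝ) < R := R_pos hn hR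
  obtain ⟨ht1, ht2, -⟩ := id hz
  set t : ℝ := (z.1 : ℝ) with ht
  have key : ∀ x : ℝ, aeval x (pol (k+1) z) =
      x ^ k * (x - 2 * t) - ∑ i ∈ range k, (aF (k+1) z i : ℝ) * x ^ i := by
    intro x
    rw [pol_aeval, Finset.sum_range_succ]
    have : aF (k+1) z k = 2 * z.1 := by unfold aF; rw [dif_neg (by omega)]
    rw [this]
    push_cast
    ring
  have h8 : (1:ℝ) ≤ 8 ^ k := one_le_pow₀ (by norm_num)
  have h6 : (1:ℝ) ≤ 6 ^ k := one_le_pow₀ (by norm_num)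
  have hn' : (2:ℝ) ≤ ((k:ℝ)+1) := by exact_mod_cast hn
  have hupper : (0:ℝ) ≤ aeval (2*t + R/10) (pol (k+1) z) := by
    rw [key]
    have hx1 : 4*R/5 ≤ 2*t + R/10 := by linarith
    have hx2 : 2*t + R/10 ≤ 9*R/10 := by linarith
    have habs : |2*t + R/10| ≤ R := by rw [abs_of_nonneg (by linarith)]; linarith
    have hq := sum_bound hn hR hz habs (j := k) (by omega)
    have hps : (4*R/5) ^ k ≤ (2*t + R/10) ^ k :=
      pow_le_pow_left₀ (by linarith) hx1 k
    have hmain : ((k:ℝ)+1) * R ^ (k+1) / E (k+1) ≤ (4*R/5) ^ k * (R/10) := by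
      rw [div_le_iff₀ hE]
      have hE' : E (k+1) = ((k:ℝ)+1)^2 * (10 * 10 ^ k) := by
        unfold E; push_cast; rw [pow_succ]; ring
      rw [hE']
      have hrw : (4*R/5) ^ k = (4/5)^k * R ^ k := by
        rw [← mul_pow]; congr 1; ring
      rw [hrw, pow_succ]
      have hcore : ((k:ℝ)+1) * 10 ≤ ((k:ℝ)+1)^2 * ((4/5)^k * 10 * 10^k) := by
        have h45 : (4/5:ℝ)^k * 10^k = 8^k := by rw [← mul_pow]; norm_num
        nlinarith [pow_pos (show (0:ℝ) < 10 by norm_num) k, sq_nonneg ((k:ℝ)+1)]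
      calc ((k:ℝ)+1) * (R^k * R) = (((k:ℝ)+1) * 10) * (R^k * (R/10)) := by ring
        _ ≤ (((k:ℝ)+1)^2 * ((4/5)^k * 10 * 10^k)) * (R^k * (R/10)) := by
            apply mul_le_mul_of_nonneg_right hcore (by positivity)
        _ = (4/5)^k * R^k * (R/10) * (((k:ℝ)+1)^2 * (10*10^k)) := by ring
    have habs2 := abs_le.mp hq
    push_cast at habs2
    have hmul := mul_le_mul_of_nonneg_right hps (show (0:ℝ) ≤ R/10 by linarith)
    have heq : (2*t + R/10) ^ k * (2*t + R/10 - 2*t) = (2*t + R/10) ^ k * (R/10) := by ring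
    rw [heq]
    linarith [habs2.2]
  have hlower : aeval (2*t - R/10) (pol (k+1) z) ≤ 0 := by
    rw [key]
    have hx1 : 3*R/5 ≤ 2*t - R/10 := by linarith
    have hx2 : 2*t - R/10 ≤ 7*R/10 := by linarith
    have habs : |2*t - R/10| ≤ R := by rw [abs_of_nonneg (by linarith)]; linarith
    have hq := sum_bound hn hR hz habs (j := k) (by omega)
    have hps : (3*R/5) ^ k ≤ (2*t - R/10) ^ k :=
      pow_le_pow_left₀ (by linarith) hx1 k
    have hmain : ((k:ℝ)+1) * R ^ (k+1) / E (k+1) ≤ (3*R/5) ^ k * (R/10) := by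
      rw [div_le_iff₀ hE]
      have hE' : E (k+1) = ((k:ℝ)+1)^2 * (10 * 10 ^ k) := by
        unfold E; push_cast; rw [pow_succ]; ring
      rw [hE']
      have hrw : (3*R/5) ^ k = (3/5)^k * R ^ k := by
        rw [← mul_pow]; congr 1; ring
      rw [hrw, pow_succ]
      have hcore : ((k:ℝ)+1) * 10 ≤ ((k:ℝ)+1)^2 * ((3/5)^k * 10 * 10^k) := by
        have h35 : (3/5:ℝ)^k * 10^k = 6^k := by rw [← mul_pow]; norm_num
        nlinarith [pow_pos (show (0:ℝ) < 10 by norm_num) k, sq_nonneg ((k:ℝ)+1)]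
      calc ((k:ℝ)+1) * (R^k * R) = (((k:ℝ)+1) * 10) * (R^k * (R/10)) := by ring
        _ ≤ (((k:ℝ)+1)^2 * ((3/5)^k * 10 * 10^k)) * (R^k * (R/10)) := by
            apply mul_le_mul_of_nonneg_right hcore (by positivity)
        _ = (3/5)^k * R^k * (R/10) * (((k:ℝ)+1)^2 * (10*10^k)) := by ring
    have habs2 := abs_le.mp hq
    push_cast at habs2
    have hmul := mul_le_mul_of_nonneg_right hps (show (0:ℝ) ≤ R/10 by linarith)
    have heq : (2*t - R/10) ^ k * (2*t - R/10 - 2*t) = -((2*t - R/10) ^ k * (R/10)) := by ring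
    rw [heq]
    linarith [habs2.1]
  have hcont : ContinuousOn (fun x : ℝ => aeval x (pol (k+1) z)) (Set.Icc (2*t - R/10) (2*t + R/10)) :=
    (Polynomial.continuous_aeval _).continuousOn
  have hle : 2*t - R/10 ≤ 2*t + R/10 := by linarith
  have := intermediate_value_Icc hle hcont
  have h0mem : (0:ℝ) ∈ Set.Icc (aeval (2*t - R/10) (pol (k+1) z)) (aeval (2*t + R/10) (pol (k+1) z)) :=
    ⟨hlower, hupper⟩
  obtain ⟨y, hy, hfy⟩ := this h0mem
  exact ⟨y, hfy, hy.1, hy.2⟩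

include hn hR hz in
lemma roots_small {y : ℝ} (hy : aeval y (pol n z) = 0)
    (hy1 : 2 * (z.1:ℝ) - R/10 ≤ y) (hy2 : y ≤ 2 * (z.1:ℝ) + R/10) :
    ∀ μ : ℂ, aeval μ (pol n z) = 0 → μ ≠ (y : ℂ) → ‖μ‖ < R / 3 := by
  obtain ⟨k, rfl⟩ : ∃ k, n = k + 1 := ⟨n - 1, by omega⟩
  have hk1 : 1 ≤ k := by omega
  have hE : (0:ℝ) < E (k+1) := lt_of_lt_of_le (by norm_num) (E_ge hn)
  have hR0 : (0:ℝ) < R := R_pos hn hR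
  obtain ⟨ht1, ht2, -⟩ := id hz
  have hylb : 3*R/5 ≤ y := by linarith
  have hyub : y ≤ 9*R/10 := by linarith
  set Pr : Polynomial ℝ := (pol (k+1) z).map (algebraMap ℤ ℝ) with hPr
  have hPrMonic : Pr.Monic := (pol_monic).map _
  have hPrdeg : Pr.natDegree = k + 1 := by
    rw [hPr, (pol_monic).natDegree_map, pol_natDegree]
  have hyroot : Pr.IsRoot y := by
    rw [IsRoot.def, eval_map]; rw [aeval_def] at hy; exact hy
  set g : Polynomial ℝ := Pr /ₘ (X - C y) with hg
  have hfact : (X - C y) * g = Pr := mul_divByMonic_eq_iff_isRoot.mpr hyroot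
  have hgMonic : g.Monic := (monic_X_sub_C y).of_mul_monic_left (hfact ▸ hPrMonic)
  have hgdeg : g.natDegree = k := by
    rw [hg, natDegree_divByMonic _ (monic_X_sub_C y), hPrdeg, natDegree_X_sub_C]
    omega
  have hcoeff : ∀ j, j < k → |g.coeff j| * (R/2)^(j+1) ≤ ((k:ℝ)+1) * R^(k+1) / E (k+1) := by
    intro j hj
    have hA : y^(j+1) * g.coeff j = ∑ i ∈ Finset.Icc (j+1) (k+1), Pr.coeff i * y^i := by
      rw [hg, coeff_divByMonic_X_sub_C, hPrdeg, Finset.mul_sum]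
      apply Finset.sum_congr rfl
      intro i hi
      have hi' := Finset.mem_Icc.mp hi
      rw [← mul_assoc, ← pow_add, show j + 1 + (i - (j+1)) = i by omega]
      ring
    have hB : ∑ i ∈ range (k+2), Pr.coeff i * y^i = 0 := by
      have h := eval_eq_sum_range (p := Pr) y
      rw [hPrdeg] at h
      rw [← h]; exact hyroot
    have hsplit : ∑ i ∈ range (k+2), Pr.coeff i * y^i
        = ∑ i ∈ range (j+1), Pr.coeff i * y^i
          + ∑ i ∈ Finset.Icc (j+1) (k+1), Pr.coeff i * y^i := by
      have hIcc : Finset.Icc (j+1) (k+1) = Finset.Ico (j+1) (k+2) := by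
        rw [← Finset.Ico_add_one_right_eq_Icc]; rfl
      rw [hIcc, Finset.range_eq_Ico, Finset.range_eq_Ico]
      exact (Finset.sum_Ico_consecutive _ (Nat.zero_le _) (by omega)).symm
    have hA2 : y^(j+1) * g.coeff j = ∑ i ∈ range (j+1), ((aF (k+1) z i : ℝ)) * y^i := by
      have hterm : ∀ i ∈ range (j+1), Pr.coeff i * y^i = -(((aF (k+1) z i : ℝ)) * y^i) := by
        intro i hi
        have hi' : i < k + 1 := by have := mem_range.mp hi; omega
        rw [hPr, coeff_map, pol_coeff_lt hi']
        simp only [algebraMap_int_eq, eq_intCast, Int.cast_neg]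
        ring
      rw [Finset.sum_congr rfl hterm, Finset.sum_neg_distrib] at hsplit
      linarith [hA, hB, hsplit]
    have habsY : |y| ≤ R := by rw [abs_of_nonneg (by linarith)]; linarith
    have hq := sum_bound hn hR hz habsY (j := j+1) (by omega)
    push_cast at hq
    rw [← hA2] at hq
    rw [abs_mul, abs_pow, abs_of_nonneg (show (0:ℝ) ≤ y by linarith)] at hq
    calc |g.coeff j| * (R/2)^(j+1) ≤ |g.coeff j| * y^(j+1) := by
          apply mul_le_mul_of_nonneg_left _ (abs_nonneg _)
          exact pow_le_pow_left₀ (by linarith) (by linarith) _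
      _ = y^(j+1) * |g.coeff j| := by ring
      _ ≤ ((k:ℝ)+1) * R^(k+1) / E (k+1) := hq
  intro μ hμroot hμne
  by_contra hcon
  push_neg at hcon
  set A := ‖μ‖ with hA
  have hApos : 0 < A := lt_of_lt_of_le (by linarith) hcon
  set gc : Polynomial ℂ := g.map (algebraMap ℝ ℂ) with hgc
  have hgcdeg : gc.natDegree = k := by rw [hgc, hgMonic.natDegree_map, hgdeg]
  have hgcmonic : gc.Monic := hgMonic.map _
  have hPc : (pol (k+1) z).map (algebraMap ℤ ℂ) = (X - C (y:ℂ)) * gc := by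
    have h1 : (pol (k+1) z).map (algebraMap ℤ ℂ) = Pr.map (algebraMap ℝ ℂ) := by
      rw [hPr, Polynomial.map_map, ← IsScalarTower.algebraMap_eq ℤ ℝ ℂ]
    rw [h1, ← hfact, Polynomial.map_mul, Polynomial.map_sub, map_X, map_C]
    norm_num [hgc]
  have hgcroot : gc.eval μ = 0 := by
    have h0 : ((pol (k+1) z).map (algebraMap ℤ ℂ)).eval μ = 0 := by
      rw [eval_map, ← aeval_def, hμroot]
    rw [hPc] at h0
    simp only [eval_mul, eval_sub, eval_X, eval_C] at h0
    rcases mul_eq_zero.mp h0 with h | h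
    · exact absurd (sub_eq_zero.mp h) hμne
    · exact h
  have hsum : ∑ j' ∈ range (k+1), gc.coeff j' * μ ^ j' = 0 := by
    have h := eval_eq_sum_range (p := gc) μ
    rw [hgcdeg] at h
    rw [← h]; exact hgcroot
  have hlead : gc.coeff k = 1 := by
    have h := hgcmonic.coeff_natDegree
    rwa [hgcdeg] at h
  have hμk : μ ^ k = -∑ j' ∈ range k, gc.coeff j' * μ ^ j' := by
    rw [Finset.sum_range_succ, hlead, one_mul] at hsum
    linear_combination hsum
  have hterm : ∀ j ∈ range k, ‖gc.coeff j * μ ^ j‖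
      ≤ ((k:ℝ)+1) * 6^(k+1) / E (k+1) * A^k := by
    intro j hj'
    have hj : j < k := mem_range.mp hj'
    have hcm : ‖gc.coeff j‖ = |g.coeff j| := by
      rw [hgc, coeff_map]
      exact (Complex.norm_real _).trans (Real.norm_eq_abs _)
    have hpow : (0:ℝ) < (R/2)^(j+1) := by positivity
    have hgj : |g.coeff j| ≤ ((k:ℝ)+1) * R^(k+1) / E (k+1) / (R/2)^(j+1) :=
      (le_div_iff₀ hpow).mpr (hcoeff j hj)
    have hRk : R^(k+1) = R^(k-j) * R^(j+1) := by
      rw [← pow_add]; congr 1; omega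
    have hDj : ((k:ℝ)+1) * R^(k+1) / E (k+1) / (R/2)^(j+1)
        = ((k:ℝ)+1)/E (k+1) * 2^(j+1) * R^(k-j) := by
      rw [div_pow, hRk]
      have : R^(j+1) ≠ 0 := by positivity
      field_simp
    have hR3 : R^(k-j) ≤ 3^(k-j) * A^(k-j) := by
      rw [← mul_pow]
      exact pow_le_pow_left₀ hR0.le (by linarith) _
    have h23 : (2:ℝ)^(j+1) * 3^(k-j) ≤ 6^(k+1) := by
      calc (2:ℝ)^(j+1) * 3^(k-j) ≤ 6^(j+1) * 6^(k-j) := by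
            apply mul_le_mul (pow_le_pow_left₀ (by norm_num) (by norm_num) _)
              (pow_le_pow_left₀ (by norm_num) (by norm_num) _) (by positivity) (by positivity)
        _ = 6^(k+1) := by rw [← pow_add]; congr 1; omega
    calc ‖gc.coeff j * μ ^ j‖ = |g.coeff j| * A^j := by
          rw [norm_mul, hcm, norm_pow]
      _ ≤ (((k:ℝ)+1)/E (k+1) * 2^(j+1) * R^(k-j)) * A^j := by
          apply mul_le_mul_of_nonneg_right _ (by positivity)
          rw [← hDj]; exact hgj
      _ ≤ (((k:ℝ)+1)/E (k+1) * 2^(j+1) * (3^(k-j) * A^(k-j))) * A^j := by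
          apply mul_le_mul_of_nonneg_right _ (by positivity)
          apply mul_le_mul_of_nonneg_left hR3 (by positivity)
      _ = ((k:ℝ)+1)/E (k+1) * (2^(j+1) * 3^(k-j)) * (A^(k-j) * A^j) := by ring
      _ = ((k:ℝ)+1)/E (k+1) * (2^(j+1) * 3^(k-j)) * A^k := by
          rw [← pow_add, show k - j + j = k by omega]
      _ ≤ ((k:ℝ)+1)/E (k+1) * 6^(k+1) * A^k := by
          apply mul_le_mul_of_nonneg_right _ (by positivity)
          apply mul_le_mul_of_nonneg_left h23 (by positivity)
      _ = ((k:ℝ)+1) * 6^(k+1) / E (k+1) * A^k := by ring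
  have hsumA : A^k ≤ (k:ℝ) * (((k:ℝ)+1) * 6^(k+1) / E (k+1) * A^k) := by
    calc A^k = ‖μ^k‖ := by rw [norm_pow]
      _ = ‖∑ j' ∈ range k, gc.coeff j' * μ ^ j'‖ := by rw [hμk, norm_neg]
      _ ≤ ∑ j' ∈ range k, ‖gc.coeff j' * μ ^ j'‖ := norm_sum_le _ _
      _ ≤ ∑ _j' ∈ range k, (((k:ℝ)+1) * 6^(k+1) / E (k+1) * A^k) := Finset.sum_le_sum hterm
      _ = (k:ℝ) * (((k:ℝ)+1) * 6^(k+1) / E (k+1) * A^k) := by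
          rw [Finset.sum_const, card_range, nsmul_eq_mul]
  have hEbig : (k:ℝ) * (((k:ℝ)+1) * 6^(k+1)) < E (k+1) := by
    have h610 : (6:ℝ)^(k+1) < 10^(k+1) :=
      pow_lt_pow_left₀ (by norm_num) (by norm_num) (by omega)
    have hkk : (k:ℝ) < (k:ℝ)+1 := by linarith
    have hE' : E (k+1) = ((k:ℝ)+1)^2 * 10^(k+1) := by unfold E; push_cast; ring
    rw [hE']
    have h6pos : (0:ℝ) < 6^(k+1) := by positivity
    have hkpos : (0:ℝ) < (k:ℝ) := by exact_mod_cast hk1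
    nlinarith [pow_pos (show (0:ℝ) < 10 by norm_num) (k+1)]
  have hAkpos : 0 < A^k := pow_pos hApos k
  have hq1 : (k:ℝ) * (((k:ℝ)+1) * 6^(k+1)) / E (k+1) < 1 := (div_lt_one hE).mpr hEbig
  have : (k:ℝ) * (((k:ℝ)+1) * 6^(k+1) / E (k+1) * A^k)
      = ((k:ℝ) * (((k:ℝ)+1) * 6^(k+1)) / E (k+1)) * A^k := by ring
  rw [this] at hsumA
  nlinarith

def Target (n : ℕ) (R : ℝ) : Set ℝ :=
  {y : ℝ | IsPerronNumber y ∧ (minpoly ℚ y).natDegree = n ∧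
            R / 2 ≤ y ∧ y ≤ R ∧
            ∀ μ ∈ (minpoly ℚ y).aroots ℂ, μ ≠ (y : ℂ) →
              ‖μ‖ < R / 3}

include hn hR hz in
lemma main_lemma : ∃ y : ℝ, y ∈ Target n R ∧
    minpoly ℚ y = (pol n z).map (algebraMap ℤ ℚ) := by
  have hR0 : (0:ℝ) < R := R_pos hn hR
  obtain ⟨ht1, ht2, -⟩ := id hz
  obtain ⟨y, hy, hy1, hy2⟩ := exists_root hn hR hz
  have hylb : 3*R/5 ≤ y := by linarith
  have hyub : y ≤ 9*R/10 := by linarith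
  have hRbig : 40000 ≤ R := R_big hn hR
  have hmp : minpoly ℚ y = (pol n z).map (algebraMap ℤ ℚ) := minpoly_eq hn hy
  have hroots : ∀ μ ∈ (minpoly ℚ y).aroots ℂ, μ ≠ (y:ℂ) → ‖μ‖ < R/3 := by
    intro μ hμ hne
    apply roots_small hn hR hz hy hy1 hy2 μ _ hne
    rw [hmp] at hμ
    have h2 := (mem_aroots'.mp hμ).2
    rwa [aeval_map_algebraMap] at h2
  have hint : IsIntegral ℤ y := ⟨pol n z, pol_monic, by rw [← aeval_def]; exact hy⟩
  have hdeg : (minpoly ℚ y).natDegree = n := by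
    rw [hmp, (pol_monic).natDegree_map, pol_natDegree]
  exact ⟨y, ⟨⟨by linarith, hint,
      fun μ hμ hne => lt_of_lt_of_le (hroots μ hμ hne) (by linarith)⟩,
      hdeg, by linarith, by linarith, hroots⟩, hmp⟩

end Analytic

set_option maxHeartbeats 1600000 in
lemma target_finite (n : ℕ) (R : ℝ) (hR : 0 < R) : (Target n R).Finite := by
  classical
  set B : ℝ := max R 1 ^ n * (n.choose (n / 2)) with hB
  set C : ℤ := ⌈B⌉ with hC
  have hfin := Polynomial.bUnion_roots_finite (Int.castRingHom ℝ) n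
    (Set.finite_Icc (-C) C)
  refine hfin.subset fun y hy => ?_
  obtain ⟨⟨hy1, hyint, hyconj⟩, hdeg, hylo, hyhi, hsmall⟩ := hy
  have hmq : minpoly ℚ y = (minpoly ℤ y).map (algebraMap ℤ ℚ) :=
    minpoly.isIntegrallyClosed_eq_field_fractions' ℚ hyint
  have hmonic : (minpoly ℤ y).Monic := minpoly.monic hyint
  have hdegZ : (minpoly ℤ y).natDegree = n := by
    rw [hmq, hmonic.natDegree_map] at hdeg; exact hdeg
  have hmapeq : ((minpoly ℤ y).map (Int.castRingHom ℂ))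
      = ((minpoly ℚ y).map (algebraMap ℚ ℂ)) := by
    rw [hmq, Polynomial.map_map, ← IsScalarTower.algebraMap_eq ℤ ℚ ℂ, algebraMap_int_eq]
  have hrootsbound : ∀ zc ∈ ((minpoly ℤ y).map (Int.castRingHom ℂ)).roots, ‖zc‖ ≤ R := by
    intro zc hzc
    have hmem : zc ∈ (minpoly ℚ y).aroots ℂ := by
      rw [aroots_def, ← hmapeq]; exact hzc
    by_cases hzy : zc = (y:ℂ)
    · rw [hzy, Complex.norm_real, Real.norm_eq_abs, abs_of_nonneg (by linarith)]
      linarith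
    · have h := hsmall zc hmem hzy
      linarith
  have hcoeffB : ∀ i, |((minpoly ℤ y).coeff i : ℝ)| ≤ B := by
    intro i
    have hsplits : Splits ((minpoly ℤ y).map (Int.castRingHom ℂ)) := by
      exact IsAlgClosed.splits _
    have h := Polynomial.coeff_bdd_of_roots_le (Int.castRingHom ℂ) hmonic
      hsplits (le_of_eq hdegZ) hrootsbound i
    rw [coeff_map] at h
    rw [hB]
    calc |((minpoly ℤ y).coeff i : ℝ)| = ‖(Int.castRingHom ℂ) ((minpoly ℤ y).coeff i)‖ := by
          rw [eq_intCast, Complex.norm_intCast]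
      _ ≤ max R 1 ^ n * (n.choose (n / 2)) := h
  simp_rw [Set.mem_iUnion]
  refine ⟨minpoly ℤ y, ⟨hdegZ.le, fun i => ?_⟩, ?_⟩
  · rw [Set.mem_Icc, ← abs_le]
    have := hcoeffB i
    have hBC : B ≤ (C:ℝ) := Int.le_ceil B
    have : |((minpoly ℤ y).coeff i : ℝ)| ≤ (C:ℝ) := le_trans this hBC
    exact_mod_cast this
  · rw [Finset.mem_coe, Multiset.mem_toFinset, mem_roots']
    refine ⟨(hmonic.map _).ne_zero, ?_⟩
    rw [IsRoot.def, eval_map, ← algebraMap_int_eq, ← aeval_def, minpoly.aeval]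

lemma two_mul_sum_aux : ∀ k : ℕ, 2 * (1 + ∑ j ∈ range k, (j + 2)) = (k+1) * (k+2) := by
  intro k
  induction k with
  | zero => simp
  | succ k ih =>
    rw [Finset.sum_range_succ]
    calc 2 * (1 + (∑ j ∈ range k, (j+2) + (k+2)))
        = 2 * (1 + ∑ j ∈ range k, (j+2)) + 2*(k+2) := by ring
      _ = (k+1)*(k+2) + 2*(k+2) := by rw [ih]
      _ = (k+1+1)*(k+1+2) := by ring

lemma exponent_eq (n : ℕ) (hn : 2 ≤ n) :
    n * (n+1) / 2 = 1 + ∑ i ∈ range (n-1), (n - i) := by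
  have hrefl : ∑ i ∈ range (n-1), (n - i) = ∑ j ∈ range (n-1), (j + 2) := by
    have h := Finset.sum_range_reflect (fun i => n - i) (n-1)
    rw [← h]
    apply Finset.sum_congr rfl
    intro j hj
    have := mem_range.mp hj
    omega
  have h2 : 2 * (1 + ∑ i ∈ range (n-1), (n - i)) = n * (n+1) := by
    rw [hrefl]
    have h := two_mul_sum_aux (n-1)
    rw [show n - 1 + 1 = n by omega, show n - 1 + 2 = n + 1 by omega] at h
    exact h
  exact Nat.div_eq_of_eq_mul_left (by norm_num) (by rw [← h2]; ring)

end PerronAux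

open PerronAux Finset in
/-- The number of Perron numbers `y` of degree `n` with `R/2 ≤ y ≤ R`
whose Galois conjugates `μ ≠ y` all satisfy `|μ| < R/3` is at least `c · R^(n(n+1)/2)` for
all sufficiently large `R` (and `R ≥ 13`). -/
theorem perron_numbers_with_small_conjugates_card_ge (n : ℕ) (hn : 2 ≤ n) :
    ∃ c : ℝ, 0 < c ∧ ∀ᶠ R : ℝ in Filter.atTop, 13 ≤ R ∧
      c * R ^ (n * (n + 1) / 2) ≤
        (({y : ℝ | IsPerronNumber y ∧ (minpoly ℚ y).natDegree = n ∧
            R / 2 ≤ y ∧ y ≤ R ∧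
            ∀ μ ∈ (minpoly ℚ y).aroots ℂ, μ ≠ (y : ℂ) →
              ‖μ‖ < R / 3}).ncard : ℝ) := by
  classical
  have hE : (0:ℝ) < E n := lt_of_lt_of_le (by norm_num) (E_ge hn)
  have hc : 0 < (1/40 : ℝ) * (1/(16 * E n))^(n-1) :=
    mul_pos (by norm_num) (pow_pos (div_pos one_pos (by linarith)) _)
  refine ⟨_, hc, ?_⟩
  rw [Filter.eventually_atTop]
  refine ⟨100 * E n, fun R hR => ?_⟩
  have hR0 : (0:ℝ) < R := R_pos hn hR
  have hRbig : 40000 ≤ R := R_big hn hR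
  have hR1 : (1:ℝ) ≤ R := by linarith
  refine ⟨by linarith, ?_⟩
  have hTset : {y : ℝ | IsPerronNumber y ∧ (minpoly ℚ y).natDegree = n ∧
      R / 2 ≤ y ∧ y ≤ R ∧
      ∀ μ ∈ (minpoly ℚ y).aroots ℂ, μ ≠ (y : ℂ) →
        ‖μ‖ < R / 3} = Target n R := rfl
  rw [hTset]
  set M : Fin (n-1) → ℤ := fun i => ⌊R ^ (n - (i:ℕ)) / (8 * E n)⌋ with hM
  set P : Finset (ℤ × (Fin (n-1) → ℤ)) :=
    (Finset.Icc ⌈7*R/20⌉ ⌊2*R/5⌋) ×ˢ (Fintype.piFinset fun i => Finset.Icc 1 (M i)) with hP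
  have hpow : ∀ i : Fin (n-1), 16 * E n ≤ R ^ (n - (i:ℕ)) := by
    intro i
    have hi2 : (2:ℕ) ≤ n - (i:ℕ) := by have := i.2; omega
    calc 16 * E n ≤ R * R := by nlinarith
      _ = R ^ 2 := (sq R).symm
      _ ≤ R ^ (n - (i:ℕ)) := pow_le_pow_right₀ hR1 hi2
  have hcond : ∀ z ∈ P, Cond n R z := by
    intro z hzP
    rw [hP, Finset.mem_product, Finset.mem_Icc] at hzP
    obtain ⟨⟨hzt1, hzt2⟩, hzm⟩ := hzP
    refine ⟨?_, ?_, fun i => ?_⟩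
    · calc 7*R/20 ≤ (⌈7*R/20⌉ : ℝ) := Int.le_ceil _
        _ ≤ (z.1 : ℝ) := by exact_mod_cast hzt1
    · calc (z.1:ℝ) ≤ (⌊2*R/5⌋ : ℝ) := by exact_mod_cast hzt2
        _ ≤ 2*R/5 := Int.floor_le _
    · have hm := Fintype.mem_piFinset.mp hzm i
      rw [Finset.mem_Icc] at hm
      refine ⟨hm.1, ?_⟩
      have h1 : (z.2 i : ℝ) ≤ R ^ (n - (i:ℕ)) / (8 * E n) := by
        calc (z.2 i : ℝ) ≤ (M i : ℝ) := by exact_mod_cast hm.2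
          _ ≤ _ := Int.floor_le _
      have h2 := hpow i
      rw [le_div_iff₀ hE]
      have h1' : (z.2 i : ℝ) * (8 * E n) ≤ R ^ (n - (i:ℕ)) :=
        (le_div_iff₀ (by linarith)).mp h1
      nlinarith
  set F : (ℤ × (Fin (n-1) → ℤ)) → ℝ := fun z =>
    if h : Cond n R z then (main_lemma hn hR h).choose else 0 with hF
  have hspec : ∀ z ∈ P, F z ∈ Target n R ∧
      minpoly ℚ (F z) = (pol n z).map (algebraMap ℤ ℚ) := by
    intro z hzP
    have h := hcond z hzP
    simp only [hF, dif_pos h]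
    exact (main_lemma hn hR h).choose_spec
  have hinj : Set.InjOn F ↑P := by
    intro z1 h1 z2 h2 heq
    have e1 := (hspec z1 (Finset.mem_coe.mp h1)).2
    have e2 := (hspec z2 (Finset.mem_coe.mp h2)).2
    rw [heq] at e1
    have hpol : pol n z1 = pol n z2 :=
      Polynomial.map_injective _ ((algebraMap ℤ ℚ).injective_int) (e1.symm.trans e2)
    have haF : ∀ i, i < n → aF n z1 i = aF n z2 i := by
      intro i hi
      have h1c : (pol n z1).coeff i = -aF n z1 i := pol_coeff_lt hi
      have h2c : (pol n z2).coeff i = -aF n z2 i := pol_coeff_lt hi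
      rw [hpol] at h1c
      omega
    have ht : z1.1 = z2.1 := by
      have h := haF (n-1) (by omega)
      unfold aF at h
      rw [dif_neg (lt_irrefl _), dif_neg (lt_irrefl _)] at h
      omega
    have hmm : z1.2 = z2.2 := by
      funext i
      have h := haF (i:ℕ) (by have := i.2; omega)
      unfold aF at h
      rw [dif_pos i.2, dif_pos i.2] at h
      simp only [Fin.eta] at h
      omega
    exact Prod.ext ht hmm
  have hfin : (Target n R).Finite := target_finite n R hR0
  have hsub : ↑(Finset.image F P) ⊆ Target n R := by
    intro x hx
    rw [Finset.coe_image] at hx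
    obtain ⟨z, hzP, rfl⟩ := hx
    exact (hspec z (Finset.mem_coe.mp hzP)).1
  have hcard1 : (Finset.image F P).card = P.card := Finset.card_image_of_injOn hinj
  have hle : ((P.card : ℕ) : ℝ) ≤ ((Target n R).ncard : ℝ) := by
    have h := Set.ncard_le_ncard hsub hfin
    rw [Set.ncard_coe_finset, hcard1] at h
    exact_mod_cast h
  refine le_trans ?_ hle
  rw [hP, Finset.card_product, Fintype.card_piFinset]
  push_cast
  have htc : R/40 ≤ ((Finset.Icc ⌈7*R/20⌉ ⌊2*R/5⌋).card : ℝ) := by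
    rw [Int.card_Icc]
    have h2 : ((⌊2*R/5⌋ + 1 - ⌈7*R/20⌉ : ℤ) : ℝ)
        ≤ (((⌊2*R/5⌋ + 1 - ⌈7*R/20⌉).toNat : ℕ) : ℝ) := by
      exact_mod_cast Int.self_le_toNat _
    have h3 : 2*R/5 - 1 < (⌊2*R/5⌋ : ℝ) := Int.sub_one_lt_floor _
    have h4 : (⌈7*R/20⌉ : ℝ) < 7*R/20 + 1 := Int.ceil_lt_add_one _
    push_cast at h2
    linarith
  have hmc : ∀ i : Fin (n-1),
      R ^ (n - (i:ℕ)) / (16 * E n) ≤ ((Finset.Icc (1:ℤ) (M i)).card : ℝ) := by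
    intro i
    rw [Int.card_Icc]
    have hMlb : R ^ (n-(i:ℕ)) / (8 * E n) - 1 < (M i : ℝ) := Int.sub_one_lt_floor _
    have h16 := hpow i
    have h2 : ((M i + 1 - 1 : ℤ) : ℝ) ≤ (((M i + 1 - 1).toNat : ℕ) : ℝ) := by
      exact_mod_cast Int.self_le_toNat _
    push_cast at h2
    have hhalf : R ^ (n-(i:ℕ)) / (8 * E n) = R ^ (n-(i:ℕ)) / (16 * E n) * 2 := by
      field_simp
      ring
    have h1 : 1 ≤ R ^ (n-(i:ℕ)) / (16 * E n) :=
      (le_div_iff₀ (by linarith)).mpr (by linarith)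
    linarith
  have hprodlb : ∏ i : Fin (n-1), (R ^ (n - (i:ℕ)) / (16 * E n))
      ≤ ∏ i : Fin (n-1), ((Finset.Icc (1:ℤ) (M i)).card : ℝ) :=
    Finset.prod_le_prod
      (fun i _ => div_nonneg (pow_nonneg hR0.le _) (by linarith))
      (fun i _ => hmc i)
  have hprodeq : ∏ i : Fin (n-1), (R ^ (n - (i:ℕ)) / (16 * E n))
      = R ^ (∑ i ∈ range (n-1), (n - i)) * (1/(16 * E n))^(n-1) := by
    calc ∏ i : Fin (n-1), (R ^ (n - (i:ℕ)) / (16 * E n))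
        = (∏ i : Fin (n-1), R ^ (n - (i:ℕ))) / (16 * E n)^(n-1) := by
          rw [Finset.prod_div_distrib, Finset.prod_const, Finset.card_univ, Fintype.card_fin]
      _ = R ^ (∑ i ∈ range (n-1), (n - i)) / (16 * E n)^(n-1) := by
          rw [Fin.prod_univ_eq_prod_range (fun i => R ^ (n - i)) (n-1),
            Finset.prod_pow_eq_pow_sum]
      _ = R ^ (∑ i ∈ range (n-1), (n - i)) * (1/(16 * E n))^(n-1) := by
          rw [one_div, inv_pow, div_eq_mul_inv]
  have hNeq : n * (n + 1) / 2 = 1 + ∑ i ∈ range (n-1), (n - i) := exponent_eq n hn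
  rw [hNeq, pow_add, pow_one]
  have hmid : (0:ℝ) ≤ R ^ (∑ i ∈ range (n-1), (n - i)) * (1/(16 * E n))^(n-1) := by
    apply mul_nonneg (pow_nonneg hR0.le _) (pow_nonneg (by positivity) _)
  calc (1/40 : ℝ) * (1/(16 * E n))^(n-1) * (R * R ^ (∑ i ∈ range (n-1), (n - i)))
      = (R/40) * (R ^ (∑ i ∈ range (n-1), (n - i)) * (1/(16 * E n))^(n-1)) := by ring
    _ ≤ ((Finset.Icc ⌈7*R/20⌉ ⌊2*R/5⌋).card : ℝ)
        * ∏ i : Fin (n-1), ((Finset.Icc (1:ℤ) (M i)).card : ℝ) := by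
        apply mul_le_mul htc (by rw [← hprodeq]; exact hprodlb) hmid
          (le_trans (by linarith) htc)
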